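/- Let f : S¹ → S¹ be an orientation-preserving homeomorphism with irrational rotation number θ, and λ the suspension-flow orbit of any point of the suspension S_f. Then the exponent group E_λ contains the subgroup ℤθ + ℤ of ℝ generated by θ and 1. -/

import Mathlib

open Filter Topology

def suspRel {Z : Type*} (g : Equiv.Perm Z) (p q : ℝ × Z) : Prop :=
  ∃ n : ℤ, q.1 = p.1 + n ∧ q.2 = (g ^ (-n)) p.2

/-- The group of exponents of a map into a topological space (here the
suspension, carrying the quotient topology). -/
def expGroupT {X : Type*} [TopologicalSpace X] (f : ℝ → X) : Set ℝ :=
  {α : ℝ | ∀ t : ℕ → ℝ, (∃ x : X, Tendsto (fun i => f (t i)) atTop (nhds x)) →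
      ∃ ξ : UnitAddCircle, Tendsto (fun i => ((α * t i : ℝ) : UnitAddCircle)) atTop (nhds ξ)}

section Aux

open Function CircleDeg1Lift

/-- The subgroup `ℤθ + ℤ` of `ℝ` is dense when `θ` is irrational. -/
lemma SuspAux.dense_zsmul_add {θ : ℝ} (hθ : Irrational θ) :
    Dense {r : ℝ | ∃ m n : ℤ, r = m * θ + n} := by
  let T : AddSubgroup ℝ :=
    { carrier := {r : ℝ | ∃ m n : ℤ, r = m * θ + n}
      zero_mem' := ⟨0, 0, by push_cast; ring⟩
      add_mem' := by
        rintro a b ⟨m1, n1, rfl⟩ ⟨m2, n2, rfl⟩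
        exact ⟨m1 + m2, n1 + n2, by push_cast; ring⟩
      neg_mem' := by
        rintro a ⟨m, n, rfl⟩
        exact ⟨-m, -n, by push_cast; ring⟩ }
  have hset : {r : ℝ | ∃ m n : ℤ, r = m * θ + n} = (T : Set ℝ) := rfl
  rw [hset]
  rcases T.dense_or_cyclic with h | ⟨a, ha⟩
  · exact h
  · exfalso
    have hθT : θ ∈ T := ⟨1, 0, by push_cast; ring⟩
    have h1T : (1 : ℝ) ∈ T := ⟨0, 1, by push_cast; ring⟩
    rw [ha, AddSubgroup.mem_closure_singleton] at hθT h1T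
    obtain ⟨p, hp⟩ := hθT
    obtain ⟨q, hq⟩ := h1T
    rw [zsmul_eq_mul] at hp hq
    have hq0 : (q : ℝ) ≠ 0 := by
      intro h0; rw [h0, zero_mul] at hq; exact one_ne_zero hq.symm
    refine hθ ⟨(p : ℚ) / (q : ℚ), ?_⟩
    have hpq : θ * q = p := by
      calc θ * q = p * a * q := by rw [hp]
        _ = p * (q * a) := by ring
        _ = p := by rw [hq, mul_one]
    push_cast
    rw [div_eq_iff hq0]
    linarith

/-- Poincaré semiconjugacy: a lift with irrational translation number `θ` is
semiconjugate to the translation by `θ`, via a *continuous* degree-one map. -/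
lemma SuspAux.exists_semiconj {θ : ℝ} (hθ : Irrational θ)
    (f : Equiv.Perm UnitAddCircle)
    (F : ℝ → ℝ) (hFmono : StrictMono F) (hFdeg : ∀ x : ℝ, F (x + 1) = F x + 1)
    (hlift : ∀ x : ℝ, f ((x : ℝ) : UnitAddCircle) = ((F x : ℝ) : UnitAddCircle))
    (hrot : Tendsto (fun n : ℕ => F^[n] 0 / n) atTop (nhds θ)) :
    ∃ H : CircleDeg1Lift, Continuous H ∧ Function.Surjective F ∧
      (∀ y, H (F y) = θ + H y) := by
  set F' : CircleDeg1Lift := ⟨⟨F, hFmono.monotone⟩, hFdeg⟩ with hF'def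
  have hF'app : ∀ y, F' y = F y := fun _ => rfl
  have Fsurj : Function.Surjective F := by
    intro y
    obtain ⟨z, hz⟩ := f.surjective ((y : ℝ) : UnitAddCircle)
    obtain ⟨w, rfl⟩ := QuotientAddGroup.mk_surjective z
    rw [hlift w] at hz
    have h0 : ((F w - y : ℝ) : UnitAddCircle) = 0 := by
      rw [AddCircle.coe_sub, hz, sub_self]
    obtain ⟨k, hk⟩ := (AddCircle.coe_eq_zero_iff _).mp h0
    simp only [zsmul_eq_mul, mul_one] at hk
    refine ⟨w + (-k), ?_⟩
    have := F'.map_add_int w (-k)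
    rw [hF'app, hF'app] at this
    push_cast at this
    rw [this]
    linarith
  have Fbij : Function.Bijective (F' : ℝ → ℝ) := ⟨hFmono.injective, Fsurj⟩
  have hτ : F'.translationNumber = θ := by
    refine tendsto_nhds_unique (F'.tendsto_translation_number₀.congr fun n => ?_) hrot
    rw [coe_pow]
    rfl
  obtain ⟨H, hH⟩ := semiconj_of_isUnit_of_translationNumber_eq
    (isUnit_iff_bijective.2 Fbij)
    ((translate (Multiplicative.ofAdd θ)).isUnit)
    (by rw [hτ, translationNumber_translate])
  have hsemi : ∀ y, H (F y) = θ + H y := fun y => by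
    have := hH y
    rwa [CircleDeg1Lift.translate_apply] at this
  have hr1 : ∀ c ∈ Set.range (H : ℝ → ℝ), c + θ ∈ Set.range (H : ℝ → ℝ) := by
    rintro _ ⟨y, rfl⟩; exact ⟨F y, by rw [hsemi]; ring⟩
  have hr2 : ∀ c ∈ Set.range (H : ℝ → ℝ), c - θ ∈ Set.range (H : ℝ → ℝ) := by
    rintro _ ⟨y, rfl⟩
    obtain ⟨z, hz⟩ := Fsurj y
    exact ⟨z, by rw [← hz, hsemi]; ring⟩
  have hmem : ∀ m : ℤ, H 0 + m * θ ∈ Set.range (H : ℝ → ℝ) := by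
    intro m
    induction m using Int.induction_on with
    | zero => simp
    | succ k ih =>
        have := hr1 _ ih
        convert this using 1; push_cast; ring
    | pred k ih =>
        have := hr2 _ ih
        convert this using 1; push_cast; ring
  have hmem2 : ∀ m n : ℤ, H 0 + (m * θ + n) ∈ Set.range (H : ℝ → ℝ) := by
    intro m n
    obtain ⟨y, hy⟩ := hmem m
    exact ⟨y + n, by rw [H.map_add_int, hy]; ring⟩
  have hdense : DenseRange (H : ℝ → ℝ) := by
    have h1 : Dense ((fun r => H 0 + r) '' {r : ℝ | ∃ m n : ℤ, r = m * θ + n}) :=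
      DenseRange.dense_image (Homeomorph.addLeft ((H : ℝ → ℝ) 0)).surjective.denseRange
        (continuous_const.add continuous_id) (SuspAux.dense_zsmul_add hθ)
    refine Dense.mono ?_ h1
    rintro _ ⟨r, ⟨m, n, rfl⟩, rfl⟩
    exact hmem2 m n
  exact ⟨H, H.monotone.continuous_of_denseRange hdense, Fsurj, hsemi⟩

/-- Descend a continuous degree-one map to the circle. -/
lemma SuspAux.exists_descend (H : CircleDeg1Lift) (Hcont : Continuous H) :
    ∃ G : UnitAddCircle → UnitAddCircle, Continuous G ∧
      ∀ y : ℝ, G ((y : ℝ) : UnitAddCircle) = ((H y : ℝ) : UnitAddCircle) := by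
  have wd : ∀ a b : ℝ, (QuotientAddGroup.leftRel (AddSubgroup.zmultiples (1 : ℝ))) a b →
      ((H a : ℝ) : UnitAddCircle) = ((H b : ℝ) : UnitAddCircle) := by
    intro a b hab
    rw [QuotientAddGroup.leftRel_apply] at hab
    obtain ⟨k, hk⟩ := hab
    simp only [zsmul_eq_mul, mul_one] at hk
    have hb : b = a + k := by linarith
    rw [hb, H.map_add_int, AddCircle.coe_add]
    have h0 : (((k : ℝ)) : UnitAddCircle) = 0 := by
      rw [AddCircle.coe_eq_zero_iff]
      exact ⟨k, by simp⟩
    rw [h0, add_zero]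
  refine ⟨fun z => Quotient.liftOn' z (fun y => ((H y : ℝ) : UnitAddCircle)) wd, ?_, ?_⟩
  · exact Continuous.quotient_liftOn' (continuous_quotient_mk'.comp Hcont) wd
  · intro y; rfl

lemma SuspAux.coe_int_zero (k : ℤ) : (((k : ℝ)) : UnitAddCircle) = 0 := by
  rw [AddCircle.coe_eq_zero_iff]
  exact ⟨k, by simp⟩

end Aux

theorem suspension_exponents_contain (θ : ℝ) (hθ : Irrational θ)
    (f : Equiv.Perm UnitAddCircle) (hfc : Continuous f) (hfc' : Continuous f.symm)
    (F : ℝ → ℝ) (hFmono : StrictMono F) (hFdeg : ∀ x : ℝ, F (x + 1) = F x + 1)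
    (hlift : ∀ x : ℝ, f ((x : ℝ) : UnitAddCircle) = ((F x : ℝ) : UnitAddCircle))
    (hrot : Tendsto (fun n : ℕ => F^[n] 0 / n) atTop (nhds θ))
    (s : ℝ) (x : UnitAddCircle) :
    {r : ℝ | ∃ m n : ℤ, r = m * θ + n}
      ⊆ expGroupT (fun t : ℝ => Quot.mk (suspRel f) (t + s, x)) := by
  obtain ⟨H, Hcont, Fsurj, hsemi⟩ := SuspAux.exists_semiconj hθ f F hFmono hFdeg hlift hrot
  obtain ⟨Hb, Hbcont, Hbmk⟩ := SuspAux.exists_descend H Hcont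
  -- semiconjugacy on the circle
  have hfb : ∀ z, Hb (f z) = ((θ : ℝ) : UnitAddCircle) + Hb z := by
    intro z
    obtain ⟨y, rfl⟩ := QuotientAddGroup.mk_surjective z
    rw [show (QuotientAddGroup.mk y : UnitAddCircle) = ((y : ℝ) : UnitAddCircle) from rfl,
      hlift, Hbmk, Hbmk, hsemi, AddCircle.coe_add]
  have hfb' : ∀ z, Hb (f.symm z) = Hb z - ((θ : ℝ) : UnitAddCircle) := by
    intro z
    have h := hfb (f.symm z)
    rw [Equiv.apply_symm_apply] at h
    rw [h]
    abel
  have hfk : ∀ k : ℤ, ∀ z, Hb ((f ^ k) z) = (((k : ℝ) * θ : ℝ) : UnitAddCircle) + Hb z := by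
    intro k
    induction k using Int.induction_on with
    | zero => intro z; simp
    | succ i ih =>
        intro z
        have h1 : (f ^ ((i : ℤ) + 1)) z = f ((f ^ (i : ℤ)) z) := by
          rw [add_comm, zpow_add, zpow_one]; rfl
        rw [h1, hfb, ih, ← add_assoc, ← AddCircle.coe_add]
        rw [show θ + ((i : ℤ) : ℝ) * θ = (((i : ℤ) + 1 : ℤ) : ℝ) * θ by push_cast; ring]
    | pred i ih =>
        intro z
        have h1 : (f ^ (-(i : ℤ) - 1)) z = f.symm ((f ^ (-(i : ℤ))) z) := by
          rw [sub_eq_add_neg, add_comm, zpow_add, zpow_neg, zpow_one]; rfl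
        rw [h1, hfb', ih, sub_eq_add_neg, add_right_comm, ← AddCircle.coe_neg,
          ← AddCircle.coe_add]
        rw [show ((-(i : ℤ) : ℤ) : ℝ) * θ + -θ = ((-(i : ℤ) - 1 : ℤ) : ℝ) * θ by
          push_cast; ring]
  -- the two continuous "coordinates" on the suspension
  set Φfun : ℝ × UnitAddCircle → UnitAddCircle :=
    fun p => Hb p.2 + ((p.1 * θ : ℝ) : UnitAddCircle) with hΦfun
  have Φinv : ∀ p q, suspRel f p q → Φfun p = Φfun q := by
    rintro p q ⟨n, h1, h2⟩
    simp only [hΦfun]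
    rw [h1, h2, hfk (-n) p.2]
    conv_rhs => rw [add_right_comm]
    rw [← AddCircle.coe_add,
      show ((-n : ℤ) : ℝ) * θ + (p.1 + (n : ℤ)) * θ = p.1 * θ by push_cast; ring]
    exact add_comm _ _
  have Φcont : Continuous Φfun :=
    (Hbcont.comp continuous_snd).add
      (continuous_quotient_mk'.comp (continuous_fst.mul continuous_const))
  set Ψfun : ℝ × UnitAddCircle → UnitAddCircle :=
    fun p => ((p.1 : ℝ) : UnitAddCircle) with hΨfun
  have Ψinv : ∀ p q, suspRel f p q → Ψfun p = Ψfun q := by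
    rintro p q ⟨n, h1, _⟩
    simp only [hΨfun]
    rw [h1, AddCircle.coe_add, SuspAux.coe_int_zero, add_zero]
  have Ψcont : Continuous Ψfun := continuous_quotient_mk'.comp continuous_fst
  rintro r ⟨m, n, rfl⟩
  intro t ht
  obtain ⟨y, hy⟩ := ht
  have hΦ : Tendsto (fun i => Hb x + (((t i + s) * θ : ℝ) : UnitAddCircle)) atTop
      (𝓝 (Quot.lift Φfun Φinv y)) := by
    have hc : Continuous (Quot.lift Φfun Φinv) := continuous_quot_lift Φinv Φcont
    exact (((hc.tendsto y).comp hy).congr fun i => rfl)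
  have hΨ : Tendsto (fun i => ((t i + s : ℝ) : UnitAddCircle)) atTop
      (𝓝 (Quot.lift Ψfun Ψinv y)) := by
    have hc : Continuous (Quot.lift Ψfun Ψinv) := continuous_quot_lift Ψinv Ψcont
    exact (((hc.tendsto y).comp hy).congr fun i => rfl)
  have h1 : Tendsto (fun i => ((θ * t i : ℝ) : UnitAddCircle)) atTop
      (𝓝 (Quot.lift Φfun Φinv y - Hb x - ((s * θ : ℝ) : UnitAddCircle))) := by
    have ha := (hΦ.sub (tendsto_const_nhds (x := Hb x))).sub
      (tendsto_const_nhds (x := ((s * θ : ℝ) : UnitAddCircle)))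
    refine ha.congr fun i => ?_
    rw [show ((t i + s) * θ : ℝ) = θ * t i + s * θ by ring, AddCircle.coe_add]
    abel
  have h2 : Tendsto (fun i => ((t i : ℝ) : UnitAddCircle)) atTop
      (𝓝 (Quot.lift Ψfun Ψinv y - ((s : ℝ) : UnitAddCircle))) := by
    have ha := hΨ.sub (tendsto_const_nhds (x := ((s : ℝ) : UnitAddCircle)))
    refine ha.congr fun i => ?_
    rw [AddCircle.coe_add]
    abel
  refine ⟨m • (Quot.lift Φfun Φinv y - Hb x - ((s * θ : ℝ) : UnitAddCircle))
    + n • (Quot.lift Ψfun Ψinv y - ((s : ℝ) : UnitAddCircle)), ?_⟩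
  have hm := ((continuous_zsmul m).tendsto _).comp h1
  have hn := ((continuous_zsmul n).tendsto _).comp h2
  refine (hm.add hn).congr fun i => ?_
  show (m : ℤ) • (((θ * t i : ℝ) : UnitAddCircle)) + (n : ℤ) • (((t i : ℝ) : UnitAddCircle))
    = (((((m : ℤ) : ℝ) * θ + ((n : ℤ) : ℝ)) * t i : ℝ) : UnitAddCircle)
  rw [← AddCircle.coe_zsmul, ← AddCircle.coe_zsmul, ← AddCircle.coe_add,
    show (m : ℤ) • (θ * t i) + (n : ℤ) • (t i : ℝ)
      = (((m : ℤ) : ℝ) * θ + ((n : ℤ) : ℝ)) * t i by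
        simp only [zsmul_eq_mul]; push_cast; ring]
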